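/- arXiv:1410.2819 — 2 statements merged into one kernel-verified Lean document; each statement's English description precedes it below -/
import Mathlib

section
/- For every s > 0, the function t ↦ exp((log t − log s)²) is convex on the interval (0, ∞). (Hence in the one-dimensional setting the additive logarithmic framework preserves convexity of the exponentiated Hencky energy.) -/
open Real Set

theorem stmt6 (s : ℝ) (hs : 0 < s) :
    ConvexOn ℝ (Set.Ioi (0 : ℝ)) (fun t => Real.exp ((Real.log t - Real.log s) ^ 2)) := by
  set c := Real.log s with hc
  set f : ℝ → ℝ := fun t => Real.exp ((Real.log t - c) ^ 2) with hf
  set g : ℝ → ℝ := fun t => Real.exp ((Real.log t - c) ^ 2) * (2 * (Real.log t - c) * t⁻¹)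
    with hgdef
  have hder : ∀ t ∈ Set.Ioi (0:ℝ), HasDerivAt f (g t) t := by
    intro t ht
    have ht0 : t ≠ 0 := ne_of_gt ht
    have h1 : HasDerivAt (fun x => Real.log x - c) t⁻¹ t :=
      (Real.hasDerivAt_log ht0).sub_const c
    have h2 : HasDerivAt (fun x => (Real.log x - c) ^ 2)
        (2 * (Real.log t - c) * t⁻¹) t := by
      have := h1.fun_pow 2
      simpa [mul_comm, mul_assoc, mul_left_comm] using this
    have h3 := h2.exp
    simpa [f, g, mul_comm, mul_assoc, mul_left_comm] using h3
  have hgder : ∀ t ∈ Set.Ioi (0:ℝ),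
      HasDerivAt g (Real.exp ((Real.log t - c) ^ 2) *
        ((2 * (Real.log t - c) * t⁻¹) ^ 2 + (2 * t⁻¹ * t⁻¹ + 2 * (Real.log t - c) * (-(t⁻¹ * t⁻¹))))) t := by
    intro t ht
    have ht0 : t ≠ 0 := ne_of_gt ht
    have h1 : HasDerivAt (fun x => Real.log x - c) t⁻¹ t :=
      (Real.hasDerivAt_log ht0).sub_const c
    have hinv : HasDerivAt (fun x : ℝ => x⁻¹) (-(t⁻¹ * t⁻¹)) t := by
      have := hasDerivAt_inv ht0
      simpa [pow_two, mul_comm] using this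
    have h2 : HasDerivAt (fun x => 2 * (Real.log x - c)) (2 * t⁻¹) t :=
      h1.const_mul 2
    have h3 : HasDerivAt (fun x => 2 * (Real.log x - c) * x⁻¹)
        (2 * t⁻¹ * t⁻¹ + 2 * (Real.log t - c) * (-(t⁻¹ * t⁻¹))) t := h2.mul hinv
    have h4 : HasDerivAt (fun x => Real.exp ((Real.log x - c) ^ 2))
        (Real.exp ((Real.log t - c) ^ 2) * (2 * (Real.log t - c) * t⁻¹)) t := by
      have h2' : HasDerivAt (fun x => (Real.log x - c) ^ 2)
          (2 * (Real.log t - c) * t⁻¹) t := by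
        have := h1.fun_pow 2
        simpa [mul_comm, mul_assoc, mul_left_comm] using this
      simpa using h2'.exp
    have := h4.mul h3
    have heq : Real.exp ((Real.log t - c) ^ 2) * (2 * (Real.log t - c) * t⁻¹) *
        (2 * (Real.log t - c) * t⁻¹) +
        Real.exp ((Real.log t - c) ^ 2) *
          (2 * t⁻¹ * t⁻¹ + 2 * (Real.log t - c) * (-(t⁻¹ * t⁻¹)))
        = Real.exp ((Real.log t - c) ^ 2) *
        ((2 * (Real.log t - c) * t⁻¹) ^ 2 +
          (2 * t⁻¹ * t⁻¹ + 2 * (Real.log t - c) * (-(t⁻¹ * t⁻¹)))) := by ring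
    rw [← heq]
    exact this
  have hderiv_eq : ∀ t ∈ Set.Ioi (0:ℝ), deriv f t = g t := fun t ht => (hder t ht).deriv
  apply convexOn_of_deriv2_nonneg (convex_Ioi 0)
  · exact fun t ht => ((hder t ht).continuousAt).continuousWithinAt
  · intro t ht
    rw [interior_Ioi] at ht
    exact ((hder t ht).differentiableAt).differentiableWithinAt
  · intro t ht
    rw [interior_Ioi] at ht
    have hev : deriv f =ᶠ[nhds t] g :=
      Filter.eventuallyEq_of_mem (isOpen_Ioi.mem_nhds ht) hderiv_eq
    exact (DifferentiableAt.congr_of_eventuallyEq (hgder t ht).differentiableAt hev).differentiableWithinAt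
  · intro t ht
    rw [interior_Ioi] at ht
    have hev : deriv f =ᶠ[nhds t] g :=
      Filter.eventuallyEq_of_mem (isOpen_Ioi.mem_nhds ht) hderiv_eq
    have : deriv (deriv f) t = deriv g t := hev.deriv_eq
    rw [Function.iterate_succ, Function.iterate_one, Function.comp_apply, this,
      (hgder t ht).deriv]
    have ht0 : (0:ℝ) < t := ht
    have hti : 0 < t⁻¹ := inv_pos.mpr ht0
    have hexp : 0 < Real.exp ((Real.log t - c) ^ 2) := Real.exp_pos _
    have : (0:ℝ) ≤ (2 * (Real.log t - c) * t⁻¹) ^ 2 +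
        (2 * t⁻¹ * t⁻¹ + 2 * (Real.log t - c) * (-(t⁻¹ * t⁻¹))) := by
      nlinarith [sq_nonneg (2 * (Real.log t - c) * t⁻¹ - t⁻¹), sq_nonneg t⁻¹]
    positivity
end

section
/- For every t ∈ ℝ, let λ₁(t) := (√(t²+4)+t)/2 and L(t) := (log λ₁(t)/√(t²+4))·[[−t, 2],[2, t]]. Then the matrix exponential of L(t) equals U(t) := (1/√(t²+4))·[[2, t],[t, t²+2]]; that is, L(t) is the principal matrix logarithm of the right stretch tensor U(t) of simple shear: L(t) = log U(t). -/
open Matrix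

/-- The right stretch tensor `U(t) = (1/√(t²+4)) • [[2, t], [t, t²+2]]` of simple shear. -/
noncomputable def Ush (t : ℝ) : Matrix (Fin 2) (Fin 2) ℝ :=
  (1 / Real.sqrt (t ^ 2 + 4)) • !![2, t; t, t ^ 2 + 2]

/-- The larger eigenvalue `λ₁(t) = (√(t²+4)+t)/2` of `U(t)`. -/
noncomputable def lam1 (t : ℝ) : ℝ := (Real.sqrt (t ^ 2 + 4) + t) / 2

/-- The principal matrix logarithm `L(t) = (log λ₁(t)/√(t²+4)) • [[−t, 2], [2, t]]`
of the right stretch tensor of simple shear. -/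
noncomputable def Lsh (t : ℝ) : Matrix (Fin 2) (Fin 2) ℝ :=
  (Real.log (lam1 t) / Real.sqrt (t ^ 2 + 4)) • !![-t, 2; 2, t]

lemma diag_fin_two (x y : ℝ) : Matrix.diagonal ![x, y] = !![x, 0; 0, y] := by
  ext i j
  fin_cases i <;> fin_cases j <;> simp [Matrix.diagonal]

set_option maxHeartbeats 1000000 in
theorem stmt11 (t : ℝ) : NormedSpace.exp (Lsh t) = Ush t := by
  set s := Real.sqrt (t ^ 2 + 4) with hs_def
  have hpos : (0:ℝ) < t ^ 2 + 4 := by positivity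
  have hs2 : s ^ 2 = t ^ 2 + 4 := Real.sq_sqrt hpos.le
  have hs0 : 0 < s := Real.sqrt_pos.mpr hpos
  have hst : t < s := by nlinarith [hs2, hs0, sq_nonneg (s - t), sq_nonneg (s + t)]
  have hst' : -s < t := by nlinarith [hs2, hs0, sq_nonneg (s - t), sq_nonneg (s + t)]
  have hlam : lam1 t = (s + t) / 2 := rfl
  have hlampos : 0 < lam1 t := by rw [hlam]; linarith
  set a := Real.log (lam1 t) with ha
  set P : Matrix (Fin 2) (Fin 2) ℝ := !![2, 2; s + t, t - s] with hP
  set Q : Matrix (Fin 2) (Fin 2) ℝ :=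
    (-(1 / (4 * s))) • !![t - s, -2; -(s + t), 2] with hQ
  have hPQ : P * Q = 1 := by
    ext i j
    fin_cases i <;> fin_cases j <;>
      simp [hP, hQ, Matrix.mul_apply, Fin.sum_univ_two] <;>
      field_simp <;> nlinarith [hs2]
  have hQP : Q * P = 1 := by
    ext i j
    fin_cases i <;> fin_cases j <;>
      simp [hP, hQ, Matrix.mul_apply, Fin.sum_univ_two] <;>
      field_simp <;> nlinarith [hs2]
  have hdet : P.det = -(4 * s) := by
    simp [hP, Matrix.det_fin_two_of]; ring
  have hPunit : IsUnit P := by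
    rw [Matrix.isUnit_iff_isUnit_det, hdet, isUnit_iff_ne_zero]
    nlinarith
  have hPinv : P⁻¹ = Q := Matrix.inv_eq_right_inv hPQ
  set D : Matrix (Fin 2) (Fin 2) ℝ := Matrix.diagonal ![a, -a] with hD
  have hLconj : Lsh t = P * D * P⁻¹ := by
    rw [hPinv]
    ext i j
    fin_cases i <;> fin_cases j <;>
      simp [Lsh, hP, hQ, hD, diag_fin_two, Matrix.mul_apply, Fin.sum_univ_two,
        ← hs_def, ← ha] <;>
      field_simp <;>
      (first
        | ring1
        | linear_combination (-8*a*s^2) * hs2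
        | linear_combination (8*a*s^2) * hs2
        | linear_combination (-8*a*s) * hs2
        | linear_combination (8*a*s) * hs2
        | linear_combination (-2*a) * hs2)
  have hsum : (0:ℝ) < s + t := by linarith
  have hexpD : NormedSpace.exp D = Matrix.diagonal ![lam1 t, (s - t) / 2] := by
    have h1 : NormedSpace.exp a = lam1 t := by
      rw [← Real.exp_eq_exp_ℝ, ha, Real.exp_log hlampos]
    have h2 : NormedSpace.exp (-a) = (s - t) / 2 := by
      rw [← Real.exp_eq_exp_ℝ, ha, Real.exp_neg, Real.exp_log hlampos, hlam]
      rw [eq_div_iff (by norm_num : (2:ℝ) ≠ 0)]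
      field_simp
      first
        | linear_combination hs2
        | linear_combination -hs2
        | linear_combination 2 * hs2
        | nlinarith [hs2]
    rw [hD, Matrix.exp_diagonal, Pi.exp_def]
    ext i j
    fin_cases i <;> fin_cases j <;>
      simp [Matrix.diagonal, h1, h2]
  rw [hLconj, Matrix.exp_conj P D hPunit, hexpD, hPinv, diag_fin_two]
  ext i j
  fin_cases i <;> fin_cases j <;>
    simp [Ush, hP, hQ, hlam, Matrix.mul_apply, Fin.sum_univ_two, ← hs_def] <;>
    field_simp <;>
    (first
      | ring1
      | linear_combination (16*t*s^2) * hs2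
      | linear_combination (-16*t*s^2) * hs2
      | linear_combination (16*t*s) * hs2
      | linear_combination (-16*t*s) * hs2
      | linear_combination (8*s^2) * hs2
      | linear_combination (-8*s^2) * hs2
      | linear_combination (2*s) * hs2
      | linear_combination (8*s) * hs2
      | linear_combination 2 * hs2
      | linear_combination (2*t) * hs2)
end
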